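/- Let n be a natural number and let X, Y be n×n complex matrices that are normal (X*X = XX* and Y*Y = YY*). Then ‖|X| − |Y|‖₂ ≤ ‖X − Y‖₂. -/

import Mathlib

open Matrix
open scoped ComplexOrder

/-- Hilbert–Schmidt (Frobenius) norm: ‖X‖₂ = √(Re Tr(XᴴX)). -/
noncomputable def hsNorm {n : ℕ} (X : Matrix (Fin n) (Fin n) ℂ) : ℝ :=
  Real.sqrt ((Matrix.trace (Xᴴ * X)).re)

/-- Angle Θ(X,Y) = arccos(Re Tr(YᴴX) / (‖X‖₂‖Y‖₂)). -/
noncomputable def theta {n : ℕ} (X Y : Matrix (Fin n) (Fin n) ℂ) : ℝ :=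
  Real.arccos ((Matrix.trace (Yᴴ * X)).re / (hsNorm X * hsNorm Y))

/-- Square root of a positive semidefinite matrix (removed from Mathlib; old definition restored). -/
noncomputable def Matrix.PosSemidef.sqrt {n : Type*} [Fintype n] [DecidableEq n] {𝕜 : Type*} [RCLike 𝕜]
    {A : Matrix n n 𝕜} (hA : A.PosSemidef) : Matrix n n 𝕜 :=
  (hA.1.eigenvectorUnitary : Matrix n n 𝕜) * diagonal ((↑) ∘ (√·) ∘ hA.1.eigenvalues) *
    (star hA.1.eigenvectorUnitary : Matrix n n 𝕜)

/-- |X| : the positive semidefinite square root of XᴴX. -/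
noncomputable def matAbs {n : ℕ} (X : Matrix (Fin n) (Fin n) ℂ) : Matrix (Fin n) (Fin n) ℂ :=
  (Matrix.posSemidef_conjTranspose_mul_self X).sqrt


namespace StmtAux

variable {n : ℕ}

/-- Functional calculus for a Hermitian matrix via its eigendecomposition. -/
noncomputable def Ffun {A : Matrix (Fin n) (Fin n) ℂ} (hA : A.IsHermitian) (f : ℝ → ℝ) :
    Matrix (Fin n) (Fin n) ℂ :=
  (hA.eigenvectorUnitary : Matrix (Fin n) (Fin n) ℂ) *
    diagonal ((↑) ∘ f ∘ hA.eigenvalues) *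
    star (hA.eigenvectorUnitary : Matrix (Fin n) (Fin n) ℂ)

variable {A : Matrix (Fin n) (Fin n) ℂ} (hA : A.IsHermitian)

lemma UstarU : star (hA.eigenvectorUnitary : Matrix (Fin n) (Fin n) ℂ) *
    (hA.eigenvectorUnitary : Matrix (Fin n) (Fin n) ℂ) = 1 :=
  Unitary.coe_star_mul_self _

lemma UUstar : (hA.eigenvectorUnitary : Matrix (Fin n) (Fin n) ℂ) *
    star (hA.eigenvectorUnitary : Matrix (Fin n) (Fin n) ℂ) = 1 :=
  Unitary.coe_mul_star_self _

/-- conjugation by U is multiplicative. -/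
lemma conj_mul_conj (M N : Matrix (Fin n) (Fin n) ℂ) :
    ((hA.eigenvectorUnitary : Matrix (Fin n) (Fin n) ℂ) * M *
      star (hA.eigenvectorUnitary : Matrix (Fin n) (Fin n) ℂ)) *
    ((hA.eigenvectorUnitary : Matrix (Fin n) (Fin n) ℂ) * N *
      star (hA.eigenvectorUnitary : Matrix (Fin n) (Fin n) ℂ)) =
    (hA.eigenvectorUnitary : Matrix (Fin n) (Fin n) ℂ) * (M * N) *
      star (hA.eigenvectorUnitary : Matrix (Fin n) (Fin n) ℂ) := by
  set U : Matrix (Fin n) (Fin n) ℂ := (hA.eigenvectorUnitary : Matrix (Fin n) (Fin n) ℂ)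
  calc U * M * star U * (U * N * star U)
      = U * M * (star U * U) * N * star U := by noncomm_ring
    _ = U * (M * N) * star U := by rw [UstarU]; noncomm_ring

lemma Ffun_mul (f g : ℝ → ℝ) :
    Ffun hA f * Ffun hA g = Ffun hA (fun s => f s * g s) := by
  unfold Ffun
  rw [conj_mul_conj, diagonal_mul_diagonal,
    show (fun i => (Complex.ofReal ∘ f ∘ hA.eigenvalues) i * (Complex.ofReal ∘ g ∘ hA.eigenvalues) i)
      = Complex.ofReal ∘ (fun s => f s * g s) ∘ hA.eigenvalues from
      funext fun i => by simp [Function.comp]]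

lemma Ffun_congr {f g : ℝ → ℝ} (h : ∀ i, f (hA.eigenvalues i) = g (hA.eigenvalues i)) :
    Ffun hA f = Ffun hA g := by
  unfold Ffun
  rw [show (Complex.ofReal ∘ f ∘ hA.eigenvalues) = (Complex.ofReal ∘ g ∘ hA.eigenvalues) from
    funext fun i => by simp [Function.comp, h i]]

lemma Ffun_one : Ffun hA (fun _ => 1) = 1 := by
  unfold Ffun
  rw [show Complex.ofReal ∘ (fun _ => (1:ℝ)) ∘ hA.eigenvalues = fun _ => (1:ℂ) by
    funext i; simp [Function.comp]]
  rw [diagonal_one, mul_one, UUstar]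

lemma Ffun_id : Ffun hA (fun s => s) = A := (hA.spectral_theorem).symm

lemma Ffun_isHermitian (f : ℝ → ℝ) : (Ffun hA f).IsHermitian := by
  have hd : (diagonal ((↑) ∘ f ∘ hA.eigenvalues) : Matrix (Fin n) (Fin n) ℂ).IsHermitian := by
    refine isHermitian_diagonal_of_self_adjoint _ ?_
    funext i
    exact Complex.conj_ofReal _
  have h2 := isHermitian_mul_mul_conjTranspose
    (hA.eigenvectorUnitary : Matrix (Fin n) (Fin n) ℂ) hd
  unfold Ffun
  rw [star_eq_conjTranspose]
  exact h2

lemma Ffun_conjTranspose (f : ℝ → ℝ) : (Ffun hA f)ᴴ = Ffun hA f :=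
  Ffun_isHermitian hA f

lemma Ffun_posSemidef {f : ℝ → ℝ} (h : ∀ i, 0 ≤ f (hA.eigenvalues i)) :
    (Ffun hA f).PosSemidef := by
  have hd : (diagonal ((↑) ∘ f ∘ hA.eigenvalues) : Matrix (Fin n) (Fin n) ℂ).PosSemidef := by
    apply PosSemidef.diagonal
    intro i
    simpa using Complex.zero_le_real.mpr (h i)
  simpa [Ffun, star_eq_conjTranspose, mul_assoc] using
    hd.mul_mul_conjTranspose_same (hA.eigenvectorUnitary : Matrix (Fin n) (Fin n) ℂ)

lemma Ffun_add (f g : ℝ → ℝ) :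
    Ffun hA (fun s => f s + g s) = Ffun hA f + Ffun hA g := by
  unfold Ffun
  rw [show (diagonal ((↑) ∘ (fun s => f s + g s) ∘ hA.eigenvalues) : Matrix (Fin n) (Fin n) ℂ)
      = diagonal ((↑) ∘ f ∘ hA.eigenvalues) + diagonal ((↑) ∘ g ∘ hA.eigenvalues) by
    rw [diagonal_add,
      show (Complex.ofReal ∘ (fun s => f s + g s) ∘ hA.eigenvalues)
        = (fun i => (Complex.ofReal ∘ f ∘ hA.eigenvalues) i + (Complex.ofReal ∘ g ∘ hA.eigenvalues) i) from
      funext fun i => by simp [Function.comp]]]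
  noncomm_ring

lemma Ffun_add_const (f : ℝ → ℝ) (c : ℝ) :
    Ffun hA (fun s => f s + c) = Ffun hA f + (c : ℂ) • 1 := by
  rw [Ffun_add hA f (fun _ => c)]
  congr 1
  unfold Ffun
  rw [show (diagonal ((↑) ∘ (fun _ => c) ∘ hA.eigenvalues) : Matrix (Fin n) (Fin n) ℂ)
      = (c : ℂ) • 1 by ext i j; simp [diagonal, Matrix.one_apply]]
  rw [mul_smul_comm, smul_mul_assoc, mul_one, UUstar]

end StmtAux
namespace StmtAux

variable {n : ℕ} {A : Matrix (Fin n) (Fin n) ℂ} (hA : A.IsHermitian)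

lemma conj_cancel {M N : Matrix (Fin n) (Fin n) ℂ}
    (h : (hA.eigenvectorUnitary : Matrix (Fin n) (Fin n) ℂ) * M *
          star (hA.eigenvectorUnitary : Matrix (Fin n) (Fin n) ℂ) =
        (hA.eigenvectorUnitary : Matrix (Fin n) (Fin n) ℂ) * N *
          star (hA.eigenvectorUnitary : Matrix (Fin n) (Fin n) ℂ)) : M = N := by
  set U : Matrix (Fin n) (Fin n) ℂ := (hA.eigenvectorUnitary : Matrix (Fin n) (Fin n) ℂ) with hU
  have := congrArg (fun Z => star U * Z * U) h
  calc M = (star U * U) * M * (star U * U) := by rw [UstarU hA]; noncomm_ring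
    _ = star U * (U * M * star U) * U := by noncomm_ring
    _ = star U * (U * N * star U) * U := by rw [h]
    _ = (star U * U) * N * (star U * U) := by noncomm_ring
    _ = N := by rw [UstarU hA]; noncomm_ring

lemma Ffun_comm {B : Matrix (Fin n) (Fin n) ℂ} (hB : B * A = A * B) (f : ℝ → ℝ) :
    B * Ffun hA f = Ffun hA f * B := by
  set U : Matrix (Fin n) (Fin n) ℂ := (hA.eigenvectorUnitary : Matrix (Fin n) (Fin n) ℂ) with hU
  set B' : Matrix (Fin n) (Fin n) ℂ := star U * B * U with hB'
  have hBU : U * B' * star U = B := by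
    rw [hB']
    calc U * (star U * B * U) * star U = (U * star U) * B * (U * star U) := by noncomm_ring
      _ = B := by rw [UUstar hA]; noncomm_ring
  have hsp : A = U * diagonal ((↑) ∘ hA.eigenvalues : Fin n → ℂ) * star U := hA.spectral_theorem
  have h1 : B' * diagonal ((↑) ∘ hA.eigenvalues : Fin n → ℂ)
      = diagonal ((↑) ∘ hA.eigenvalues : Fin n → ℂ) * B' := by
    apply conj_cancel hA
    rw [← conj_mul_conj hA B' _, ← conj_mul_conj hA _ B', hBU, ← hsp]
    exact hB
  have key : ∀ i j, B' i j * (hA.eigenvalues j : ℂ) = (hA.eigenvalues i : ℂ) * B' i j := by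
    intro i j
    simpa [mul_diagonal, diagonal_mul, Function.comp] using congrFun (congrFun h1 i) j
  have h2 : B' * diagonal ((↑) ∘ f ∘ hA.eigenvalues : Fin n → ℂ)
      = diagonal ((↑) ∘ f ∘ hA.eigenvalues : Fin n → ℂ) * B' := by
    ext i j
    simp only [mul_diagonal, diagonal_mul, Function.comp_apply]
    rcases eq_or_ne (B' i j) 0 with h | h
    · simp [h]
    · have hev : hA.eigenvalues j = hA.eigenvalues i := by
        have hk := key i j
        rw [mul_comm ((hA.eigenvalues i : ℂ))] at hk
        have := mul_left_cancel₀ h hk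
        exact_mod_cast this
      rw [hev, mul_comm]
  calc B * Ffun hA f = U * B' * star U * (U * diagonal ((↑) ∘ f ∘ hA.eigenvalues) * star U) := by
        rw [hBU]; rfl
    _ = U * (B' * diagonal ((↑) ∘ f ∘ hA.eigenvalues)) * star U := conj_mul_conj hA _ _
    _ = U * (diagonal ((↑) ∘ f ∘ hA.eigenvalues) * B') * star U := by rw [h2]
    _ = (U * diagonal ((↑) ∘ f ∘ hA.eigenvalues) * star U) * (U * B' * star U) := by
        rw [conj_mul_conj hA]
    _ = Ffun hA f * B := by rw [hBU]; rfl

lemma sqrt_eq_Ffun {A : Matrix (Fin n) (Fin n) ℂ} (hA : A.PosSemidef) :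
    hA.sqrt = Ffun hA.1 Real.sqrt := rfl

lemma psd_sqrt_psd {A : Matrix (Fin n) (Fin n) ℂ} (hA : A.PosSemidef) : hA.sqrt.PosSemidef := by
  rw [sqrt_eq_Ffun]; exact Ffun_posSemidef hA.1 fun i => Real.sqrt_nonneg _

lemma psd_sqrt_mul_self {A : Matrix (Fin n) (Fin n) ℂ} (hA : A.PosSemidef) :
    hA.sqrt * hA.sqrt = A := by
  rw [sqrt_eq_Ffun, Ffun_mul, Ffun_congr hA.1 (g := fun s => s)
    (fun i => Real.mul_self_sqrt (hA.eigenvalues_nonneg i)), Ffun_id]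

end StmtAux
namespace StmtAux

variable {n : ℕ} {A : Matrix (Fin n) (Fin n) ℂ} (hA : A.IsHermitian)

lemma qf_re_nonneg {M : Matrix (Fin n) (Fin n) ℂ} (hM : M.PosSemidef) (x : Fin n → ℂ) :
    0 ≤ (star x ⬝ᵥ M *ᵥ x).re :=
  hM.re_dotProduct_nonneg x

lemma qf_mono {f g : ℝ → ℝ} (hfg : ∀ i, f (hA.eigenvalues i) ≤ g (hA.eigenvalues i))
    (x : Fin n → ℂ) :
    (star x ⬝ᵥ Ffun hA f *ᵥ x).re ≤ (star x ⬝ᵥ Ffun hA g *ᵥ x).re := by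
  have hsplit : Ffun hA g = Ffun hA f + Ffun hA (fun s => g s - f s) := by
    rw [← Ffun_add]
    exact Ffun_congr hA fun i => by ring
  have hpos : (Ffun hA (fun s => g s - f s)).PosSemidef :=
    Ffun_posSemidef hA fun i => by linarith [hfg i]
  have := qf_re_nonneg hpos x
  rw [hsplit, add_mulVec, dotProduct_add, Complex.add_re]
  linarith

lemma dp_split (M N : Matrix (Fin n) (Fin n) ℂ) (u v : Fin n → ℂ) :
    star u ⬝ᵥ (M * N) *ᵥ v = star (Mᴴ *ᵥ u) ⬝ᵥ (N *ᵥ v) := by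
  rw [star_mulVec, conjTranspose_conjTranspose, dotProduct_mulVec, dotProduct_mulVec,
    vecMul_vecMul]

lemma dp_cauchy (a b : Fin n → ℂ) :
    ‖star a ⬝ᵥ b‖ ^ 2 ≤ (star a ⬝ᵥ a).re * (star b ⬝ᵥ b).re := by
  let a' : EuclideanSpace ℂ (Fin n) := WithLp.toLp 2 a
  let b' : EuclideanSpace ℂ (Fin n) := WithLp.toLp 2 b
  have h1 : (inner ℂ a' b' : ℂ) = star a ⬝ᵥ b :=
    (EuclideanSpace.inner_toLp_toLp a b).trans (dotProduct_comm _ _)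
  have h2 : (inner ℂ a' a' : ℂ) = star a ⬝ᵥ a :=
    (EuclideanSpace.inner_toLp_toLp a a).trans (dotProduct_comm _ _)
  have h3 : (inner ℂ b' b' : ℂ) = star b ⬝ᵥ b :=
    (EuclideanSpace.inner_toLp_toLp b b).trans (dotProduct_comm _ _)
  have hcs := norm_inner_le_norm (𝕜 := ℂ) a' b'
  have hsq : ‖(inner ℂ a' b' : ℂ)‖ ^ 2 ≤ (‖a'‖ * ‖b'‖) ^ 2 := by
    have := norm_nonneg ((inner ℂ a' b' : ℂ))
    nlinarith
  calc ‖star a ⬝ᵥ b‖ ^ 2 = ‖(inner ℂ a' b' : ℂ)‖ ^ 2 := by rw [h1]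
    _ ≤ (‖a'‖ * ‖b'‖) ^ 2 := hsq
    _ = (‖a'‖ ^ 2) * (‖b'‖ ^ 2) := by ring
    _ = (star a ⬝ᵥ a).re * (star b ⬝ᵥ b).re := by
        rw [← inner_self_eq_norm_sq (𝕜 := ℂ) a', ← inner_self_eq_norm_sq (𝕜 := ℂ) b', h2, h3]
        rfl

end StmtAux
namespace StmtAux

variable {n : ℕ}

lemma key_qf_aux (X : Matrix (Fin n) (Fin n) ℂ) (hXn : Xᴴ * X = X * Xᴴ) (u v : Fin n → ℂ) :
    2 * ‖star u ⬝ᵥ X *ᵥ v‖ ≤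
      (star u ⬝ᵥ (Ffun (Matrix.posSemidef_conjTranspose_mul_self X).1 Real.sqrt) *ᵥ u).re
      + (star v ⬝ᵥ (Ffun (Matrix.posSemidef_conjTranspose_mul_self X).1 Real.sqrt) *ᵥ v).re := by
  have hA := Matrix.posSemidef_conjTranspose_mul_self X
  set hH : (Xᴴ * X).IsHermitian := (Matrix.posSemidef_conjTranspose_mul_self X).1 with hHdef
  have hev : ∀ i, 0 ≤ hH.eigenvalues i := fun i => hA.eigenvalues_nonneg i
  have hXA : X * (Xᴴ * X) = (Xᴴ * X) * X := by
    calc X * (Xᴴ * X) = (X * Xᴴ) * X := by rw [mul_assoc]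
      _ = (Xᴴ * X) * X := by rw [hXn]
  set α : ℝ := (star u ⬝ᵥ (Ffun hH Real.sqrt) *ᵥ u).re with hα
  set β : ℝ := (star v ⬝ᵥ (Ffun hH Real.sqrt) *ᵥ v).re with hβ
  have hαnn : 0 ≤ α := qf_re_nonneg (Ffun_posSemidef hH fun i => Real.sqrt_nonneg _) u
  have hβnn : 0 ≤ β := qf_re_nonneg (Ffun_posSemidef hH fun i => Real.sqrt_nonneg _) v
  set Kv : ℝ := (star v ⬝ᵥ v).re with hKv
  have hKvnn : 0 ≤ Kv := by
    have := qf_re_nonneg (M := (1 : Matrix (Fin n) (Fin n) ℂ)) Matrix.PosSemidef.one v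
    rwa [one_mulVec] at this
  set c : ℂ := star u ⬝ᵥ X *ᵥ v with hc
  -- the ε-approximate inequality
  have main : ∀ ε : ℝ, 0 < ε → 2 * ‖c‖ ≤ α + β + ε * Kv := by
    intro ε hε
    set g : ℝ → ℝ := fun s => (Real.sqrt (Real.sqrt s + ε))⁻¹ with hg
    set h : ℝ → ℝ := fun s => Real.sqrt (Real.sqrt s + ε) with hh
    have hpos : ∀ s : ℝ, 0 < Real.sqrt s + ε := fun s => by
      have := Real.sqrt_nonneg s; linarith
    have hgh : ∀ s : ℝ, g s * h s = 1 := fun s =>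
      inv_mul_cancel₀ (ne_of_gt (Real.sqrt_pos.mpr (hpos s)))
    have hhh : ∀ s : ℝ, h s * h s = Real.sqrt s + ε := fun s =>
      Real.mul_self_sqrt (le_of_lt (hpos s))
    have step1 : X = (X * Ffun hH g) * Ffun hH h := by
      rw [mul_assoc, Ffun_mul, Ffun_congr hH (g := fun _ => 1) fun i => hgh _, Ffun_one, mul_one]
    set M : Matrix (Fin n) (Fin n) ℂ := X * Ffun hH g with hM
    have hcab : c = star (Mᴴ *ᵥ u) ⬝ᵥ (Ffun hH h *ᵥ v) := by
      rw [hc]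
      conv_lhs => rw [step1]
      exact dp_split _ _ u v
    set a : Fin n → ℂ := Mᴴ *ᵥ u with ha
    set b : Fin n → ℂ := Ffun hH h *ᵥ v with hb
    -- compute star a ⬝ᵥ a
    have hMH : Mᴴ = Ffun hH g * Xᴴ := by
      rw [hM, conjTranspose_mul, Ffun_conjTranspose]
    have hMM : M * Mᴴ = Ffun hH (fun s => (g s * g s) * s) := by
      rw [hM, hMH]
      calc X * Ffun hH g * (Ffun hH g * Xᴴ)
          = X * (Ffun hH g * Ffun hH g) * Xᴴ := by noncomm_ring
        _ = X * Ffun hH (fun s => g s * g s) * Xᴴ := by rw [Ffun_mul]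
        _ = Ffun hH (fun s => g s * g s) * X * Xᴴ := by
            rw [Ffun_comm hH hXA]
        _ = Ffun hH (fun s => g s * g s) * (Xᴴ * X) := by rw [mul_assoc, ← hXn]
        _ = Ffun hH (fun s => g s * g s) * Ffun hH (fun s => s) := by rw [Ffun_id]
        _ = Ffun hH (fun s => (g s * g s) * s) := Ffun_mul hH _ _
    have haa : (star a ⬝ᵥ a).re ≤ α := by
      have e1 : star a ⬝ᵥ a = star u ⬝ᵥ (M * Mᴴ) *ᵥ u := (dp_split M Mᴴ u u).symm
      rw [e1, hMM, hα]
      apply qf_mono hH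
      intro i
      set t : ℝ := hH.eigenvalues i with ht
      have htnn : 0 ≤ t := hev i
      have hgg : g t * g t = (Real.sqrt t + ε)⁻¹ := by
        rw [hg]
        rw [← mul_inv]
        rw [hhh t]
      rw [hgg]
      rw [inv_mul_eq_div, div_le_iff₀ (hpos t)]
      nlinarith [Real.mul_self_sqrt htnn, Real.sqrt_nonneg t]
    have hbb : (star b ⬝ᵥ b).re = β + ε * Kv := by
      have e1 : star b ⬝ᵥ b = star v ⬝ᵥ (Ffun hH h * Ffun hH h) *ᵥ v := by
        rw [hb]
        calc star (Ffun hH h *ᵥ v) ⬝ᵥ (Ffun hH h *ᵥ v)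
            = star ((Ffun hH h)ᴴ *ᵥ v) ⬝ᵥ (Ffun hH h *ᵥ v) := by rw [Ffun_conjTranspose]
          _ = star v ⬝ᵥ (Ffun hH h * Ffun hH h) *ᵥ v := (dp_split _ _ v v).symm
      rw [e1, Ffun_mul, Ffun_congr hH (g := fun s => Real.sqrt s + ε) (fun i => hhh _),
        Ffun_add_const, add_mulVec, dotProduct_add, Complex.add_re,
        smul_mulVec, one_mulVec, dotProduct_smul]
      rw [hβ, hKv]
      congr 1
      simp [smul_eq_mul, Complex.re_ofReal_mul]
    have hbbnn : (0:ℝ) ≤ β + ε * Kv := by positivity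
    have h1 : ‖c‖ ^ 2 ≤ α * (β + ε * Kv) := by
      calc ‖c‖ ^ 2 = ‖star a ⬝ᵥ b‖ ^ 2 := by rw [hcab]
        _ ≤ (star a ⬝ᵥ a).re * (star b ⬝ᵥ b).re := dp_cauchy a b
        _ ≤ α * (β + ε * Kv) := by
            rw [hbb]
            exact mul_le_mul_of_nonneg_right haa hbbnn
    nlinarith [sq_nonneg (α - (β + ε * Kv)), norm_nonneg c, hαnn, hbbnn]
  -- remove ε
  have final : 2 * ‖c‖ ≤ α + β := by
    refine le_of_forall_pos_le_add fun δ hδ => ?_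
    have hδ' : 0 < δ / (Kv + 1) := by positivity
    have := main (δ / (Kv + 1)) hδ'
    have hle : δ / (Kv + 1) * Kv ≤ δ := by
      rw [div_mul_eq_mul_div, div_le_iff₀ (by linarith)]
      nlinarith
    linarith
  exact final
end StmtAux
namespace StmtAux

variable {n : ℕ}

lemma psd_diag_nonneg {m : Type*} [Fintype m] [DecidableEq m] {M : Matrix m m ℂ}
    (hM : M.PosSemidef) (i : m) : 0 ≤ M i i := by
  have h := hM.dotProduct_mulVec_nonneg (Pi.single i 1)
  simpa [dotProduct, Pi.single_apply, apply_ite (starRingEnd ℂ), ite_mul] using h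

lemma psd_trace_nonneg {m : Type*} [Fintype m] [DecidableEq m] {M : Matrix m m ℂ}
    (hM : M.PosSemidef) : 0 ≤ M.trace := by
  rw [Matrix.trace]
  exact Finset.sum_nonneg fun i _ => psd_diag_nonneg hM i

lemma trace_mul_psd_nonneg {m : Type*} [Fintype m] [DecidableEq m] {S T : Matrix m m ℂ}
    (hS : S.PosSemidef) (hT : T.PosSemidef) : 0 ≤ (S * T).trace := by
  obtain ⟨B, hB⟩ : ∃ B : Matrix m m ℂ, T = Bᴴ * B := by
    open scoped MatrixOrder in
    obtain ⟨B, hB⟩ := CStarAlgebra.nonneg_iff_eq_star_mul_self.mp hT.nonneg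
    exact ⟨B, hB⟩
  have : S * T = S * Bᴴ * B := by rw [hB, mul_assoc]
  rw [this, Matrix.trace_mul_comm, ← mul_assoc]
  exact psd_trace_nonneg (hS.mul_mul_conjTranspose_same B)

lemma star_dp (X : Matrix (Fin n) (Fin n) ℂ) (u v : Fin n → ℂ) :
    star (star u ⬝ᵥ X *ᵥ v) = star v ⬝ᵥ Xᴴ *ᵥ u := by
  rw [Matrix.star_dotProduct, star_star, Matrix.star_mulVec, Matrix.dotProduct_mulVec]

lemma blockPSD (X : Matrix (Fin n) (Fin n) ℂ) (hXn : Xᴴ * X = X * Xᴴ) :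
    (Matrix.fromBlocks ((Matrix.posSemidef_conjTranspose_mul_self X).sqrt) X Xᴴ
      ((Matrix.posSemidef_conjTranspose_mul_self X).sqrt)).PosSemidef := by
  have hA := Matrix.posSemidef_conjTranspose_mul_self X
  set P : Matrix (Fin n) (Fin n) ℂ := hA.sqrt with hP
  have hPpsd : P.PosSemidef := psd_sqrt_psd hA
  refine Matrix.PosSemidef.of_dotProduct_mulVec_nonneg ?_ ?_
  · rw [Matrix.IsHermitian, Matrix.fromBlocks_conjTranspose, conjTranspose_conjTranspose,
      hPpsd.1.eq]
  · intro x
    set u : Fin n → ℂ := x ∘ Sum.inl with hu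
    set v : Fin n → ℂ := x ∘ Sum.inr with hv
    have hsu : star x ∘ Sum.inl = star u := rfl
    have hsv : star x ∘ Sum.inr = star v := rfl
    rw [Matrix.fromBlocks_mulVec, Matrix.dotProduct_block]
    simp only [Sum.elim_comp_inl, Sum.elim_comp_inr, hsu, hsv]
    rw [dotProduct_add, dotProduct_add]
    set z : ℂ := star u ⬝ᵥ X *ᵥ v with hz
    have hzstar : star v ⬝ᵥ Xᴴ *ᵥ u = star z := (star_dp X u v).symm
    set q1 : ℂ := star u ⬝ᵥ P *ᵥ u with hq1
    set q2 : ℂ := star v ⬝ᵥ P *ᵥ v with hq2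
    have hq1' : 0 ≤ q1 := hPpsd.dotProduct_mulVec_nonneg u
    have hq2' : 0 ≤ q2 := hPpsd.dotProduct_mulVec_nonneg v
    rw [hzstar]
    -- goal : 0 ≤ q1 + z + (star z + q2)
    have him : (q1 + z + (star z + q2)).im = 0 := by
      have h1 : q1.im = 0 := (Complex.le_def.mp hq1').2.symm
      have h2 : q2.im = 0 := (Complex.le_def.mp hq2').2.symm
      simp [Complex.add_im, h1, h2, Complex.conj_im]
    have hre : 0 ≤ (q1 + z + (star z + q2)).re := by
      have hkey := key_qf_aux X hXn u v
      have hPF : P = Ffun hA.1 Real.sqrt := sqrt_eq_Ffun hA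
      rw [hPF] at hq1 hq2
      have hzre : -‖z‖ ≤ z.re := by
        have := abs_le.mp (Complex.abs_re_le_norm z)
        linarith [this.1]
      simp only [Complex.add_re, Complex.conj_re]
      rw [hq1, hq2] at *
      rw [hz] at *
      simp only [RCLike.star_def, Complex.conj_re]
      nlinarith [hkey, hzre, norm_nonneg z]
    rw [Complex.le_def]
    constructor
    · simpa using hre
    · exact him.symm

end StmtAux
namespace StmtAux

lemma trace_fromBlocks {m k : Type*} [Fintype m] [Fintype k]
    (A : Matrix m m ℂ) (B : Matrix m k ℂ) (C : Matrix k m ℂ) (D : Matrix k k ℂ) :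
    (Matrix.fromBlocks A B C D).trace = A.trace + D.trace := by
  simp [Matrix.trace, Fintype.sum_sum_type, Matrix.diag, Matrix.fromBlocks]

end StmtAux

open StmtAux in
theorem stmt_15' {n : ℕ} (X Y : Matrix (Fin n) (Fin n) ℂ)
    (hXn : Xᴴ * X = X * Xᴴ) (hYn : Yᴴ * Y = Y * Yᴴ) :
    Real.sqrt ((Matrix.trace ((((Matrix.posSemidef_conjTranspose_mul_self X).sqrt -
      (Matrix.posSemidef_conjTranspose_mul_self Y).sqrt))ᴴ *
      ((Matrix.posSemidef_conjTranspose_mul_self X).sqrt -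
      (Matrix.posSemidef_conjTranspose_mul_self Y).sqrt))).re) ≤
    Real.sqrt ((Matrix.trace ((X - Y)ᴴ * (X - Y))).re) := by
  have hAX := Matrix.posSemidef_conjTranspose_mul_self X
  have hAY := Matrix.posSemidef_conjTranspose_mul_self Y
  set P : Matrix (Fin n) (Fin n) ℂ := (Matrix.posSemidef_conjTranspose_mul_self X).sqrt with hPdef
  set Q : Matrix (Fin n) (Fin n) ℂ := (Matrix.posSemidef_conjTranspose_mul_self Y).sqrt with hQdef
  have hPP : P * P = Xᴴ * X := psd_sqrt_mul_self hAX
  have hQQ : Q * Q = Yᴴ * Y := psd_sqrt_mul_self hAY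
  have hPH : Pᴴ = P := (psd_sqrt_psd hAX).1
  have hQH : Qᴴ = Q := (psd_sqrt_psd hAY).1
  -- key trace inequality
  have key : (Matrix.trace (Yᴴ * X)).re + (Matrix.trace (Xᴴ * Y)).re
      ≤ 2 * (Matrix.trace (P * Q)).re := by
    have h1 := blockPSD X hXn
    have h2 := blockPSD Y hYn
    set E : Matrix (Fin n ⊕ Fin n) (Fin n ⊕ Fin n) ℂ :=
      Matrix.fromBlocks (1 : Matrix (Fin n) (Fin n) ℂ) 0 0 (-1) with hE
    have hE' : E * (Matrix.fromBlocks Q Y Yᴴ Q) * Eᴴ = Matrix.fromBlocks Q (-Y) (-Yᴴ) Q := by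
      rw [hE, Matrix.fromBlocks_conjTranspose, Matrix.fromBlocks_multiply,
        Matrix.fromBlocks_multiply]
      simp
    have hT' : (Matrix.fromBlocks Q (-Y) (-Yᴴ) Q).PosSemidef := by
      have h3 := h2.mul_mul_conjTranspose_same E
      rwa [hE'] at h3
    have htr := trace_mul_psd_nonneg h1 hT'
    rw [Matrix.fromBlocks_multiply, trace_fromBlocks] at htr
    have hre := (Complex.le_def.mp htr).1
    simp only [Complex.zero_re, Matrix.trace_add, Matrix.mul_neg, Matrix.trace_neg,
      Complex.add_re, Complex.neg_re] at hre
    have hc1 : Matrix.trace (X * Yᴴ) = Matrix.trace (Yᴴ * X) := Matrix.trace_mul_comm _ _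
    rw [hc1] at hre
    linarith
  apply Real.sqrt_le_sqrt
  -- expand both quadratic forms
  have hL : ((P - Q)ᴴ * (P - Q)) = P * P - P * Q - Q * P + Q * Q := by
    rw [Matrix.conjTranspose_sub, hPH, hQH]
    noncomm_ring
  have hR : ((X - Y)ᴴ * (X - Y)) = Xᴴ * X - Xᴴ * Y - Yᴴ * X + Yᴴ * Y := by
    rw [Matrix.conjTranspose_sub]
    noncomm_ring
  rw [hL, hR, hPP, hQQ]
  have hc2 : Matrix.trace (Q * P) = Matrix.trace (P * Q) := Matrix.trace_mul_comm _ _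
  simp only [Matrix.trace_add, Matrix.trace_sub, Complex.add_re, Complex.sub_re, hc2]
  linarith


theorem stmt_15 {n : ℕ} (X Y : Matrix (Fin n) (Fin n) ℂ)
    (hXn : Xᴴ * X = X * Xᴴ) (hYn : Yᴴ * Y = Y * Yᴴ) :
    hsNorm (matAbs X - matAbs Y) ≤ hsNorm (X - Y) := by
  unfold hsNorm matAbs
  exact stmt_15' X Y hXn hYn
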